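/- Let u : ℝ × ℝ → ℝ solve the Black-Scholes equation u_t + (1/2)σ²x²u_xx + r·x·u_x - r·u = 0 on a domain, let b ∈ ℝ, and let T^t, T^x be the conserved vector defined by T^t(x,t) = -u_x·l(t) + a/x + (2b·u/(σ²x))·e^{-rt}, T^x(x,t) = u_t·l(t) + u·l'(t) + g(t) - b·u·e^{-rt} + b·(u_x + 2ru/(σ²x))·x·e^{-rt}, with l, g differentiable. Then D_t T^t + D_x T^x = 0 at every point of the domain with x ≠ 0. -/

import Mathlib

open Real MeasureTheory

noncomputable def pdx (u : ℝ → ℝ → ℝ) (x t : ℝ) : ℝ := deriv (fun x' => u x' t) x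
noncomputable def pdt (u : ℝ → ℝ → ℝ) (x t : ℝ) : ℝ := deriv (fun t' => u x t') t
noncomputable def pdxx (u : ℝ → ℝ → ℝ) (x t : ℝ) : ℝ := deriv (fun x' => pdx u x' t) x

theorem stmt1 (u : ℝ → ℝ → ℝ) (hu : ContDiff ℝ 2 (Function.uncurry u))
    (D : Set (ℝ × ℝ)) (σ r a b : ℝ) (hσ : 0 < σ)
    (hsol : ∀ p ∈ D, pdt u p.1 p.2 + (1 / 2) * σ ^ 2 * p.1 ^ 2 * pdxx u p.1 p.2
              + r * p.1 * pdx u p.1 p.2 - r * u p.1 p.2 = 0)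
    (l g : ℝ → ℝ) (hl : Differentiable ℝ l) (hg : Differentiable ℝ g) :
    ∀ p ∈ D, p.1 ≠ 0 →
      pdt (fun x' t' => -pdx u x' t' * l t' + a / x'
            + (2 * b * u x' t' / (σ ^ 2 * x')) * Real.exp (-r * t')) p.1 p.2
      + pdx (fun x' t' => pdt u x' t' * l t' + u x' t' * deriv l t' + g t'
            - b * u x' t' * Real.exp (-r * t')
            + b * (pdx u x' t' + 2 * r * u x' t' / (σ ^ 2 * x')) * x' * Real.exp (-r * t')) p.1 p.2
      = 0 := by
  intro p hp hx0
  obtain ⟨x, t⟩ := p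
  simp only at hx0
  have hpde := hsol (x, t) hp
  simp only at hpde
  have hσ2 : σ ^ 2 ≠ 0 := pow_ne_zero _ hσ.ne'
  set F : ℝ × ℝ → ℝ := Function.uncurry u with hF
  have hFd : Differentiable ℝ F := hu.differentiable (by norm_num)
  have hf'c : ContDiff ℝ 1 (fderiv ℝ F) := hu.fderiv_right (by norm_num)
  set f'' : ℝ × ℝ →L[ℝ] ℝ × ℝ →L[ℝ] ℝ := fderiv ℝ (fderiv ℝ F) (x, t) with hf''
  have hf''at : HasFDerivAt (fderiv ℝ F) f'' (x, t) :=
    ((hf'c.differentiable (by norm_num)) (x, t)).hasFDerivAt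
  have hsymm : ∀ v w, f'' v w = f'' w v :=
    second_derivative_symmetric (fun y => (hFd y).hasFDerivAt) hf''at
  -- curves
  have hcx : ∀ t : ℝ, HasDerivAt (fun x' : ℝ => ((x', t) : ℝ × ℝ)) (1, 0) x :=
    fun t => (hasDerivAt_id x).prodMk (hasDerivAt_const x t)
  have hct : ∀ x : ℝ, HasDerivAt (fun t' : ℝ => ((x, t') : ℝ × ℝ)) (0, 1) t :=
    fun x => (hasDerivAt_const t x).prodMk (hasDerivAt_id t)
  -- first partials as fderiv applications
  have hpdx_eq : ∀ x t : ℝ, pdx u x t = fderiv ℝ F (x, t) (1, 0) := by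
    intro x t
    have h := ((hFd (x, t)).hasFDerivAt).comp_hasDerivAt x
      ((hasDerivAt_id x).prodMk (hasDerivAt_const x t))
    exact h.deriv
  have hpdt_eq : ∀ x t : ℝ, pdt u x t = fderiv ℝ F (x, t) (0, 1) := by
    intro x t
    have h := ((hFd (x, t)).hasFDerivAt).comp_hasDerivAt t
      ((hasDerivAt_const t x).prodMk (hasDerivAt_id t))
    exact h.deriv
  set P := fderiv ℝ F (x, t) (1, 0) with hP
  set Q := fderiv ℝ F (x, t) (0, 1) with hQ
  set R := f'' (1, 0) (1, 0) with hR
  set M := f'' (1, 0) (0, 1) with hM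
  set U := u x t with hU
  -- derivative of fderiv application maps
  have happ : ∀ v : ℝ × ℝ, HasFDerivAt (fun q => fderiv ℝ F q v)
      ((ContinuousLinearMap.apply ℝ ℝ v).comp f'') (x, t) :=
    fun v => (ContinuousLinearMap.apply ℝ ℝ v).hasFDerivAt.comp (x, t) hf''at
  -- pointwise HasDerivAt facts at (x,t)
  have hU_x : HasDerivAt (fun x' => u x' t) P x :=
    by have h := ((hFd (x, t)).hasFDerivAt).comp_hasDerivAt x (hcx t); exact h
  have hU_t : HasDerivAt (fun t' => u x t') Q t :=
    by have h := ((hFd (x, t)).hasFDerivAt).comp_hasDerivAt t (hct x); exact h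
  have hP_x : HasDerivAt (fun x' => pdx u x' t) R x := by
    have he : (fun x' => pdx u x' t) = fun x' => fderiv ℝ F (x', t) (1, 0) :=
      funext fun x' => hpdx_eq x' t
    rw [he]
    exact (happ (1, 0)).comp_hasDerivAt x (hcx t)
  have hP_t : HasDerivAt (fun t' => pdx u x t') M t := by
    have he : (fun t' => pdx u x t') = fun t' => fderiv ℝ F (x, t') (1, 0) :=
      funext fun t' => hpdx_eq x t'
    rw [he, hM, hsymm (1, 0) (0, 1)]
    exact (happ (1, 0)).comp_hasDerivAt t (hct x)
  have hQ_x : HasDerivAt (fun x' => pdt u x' t) M x := by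
    have he : (fun x' => pdt u x' t) = fun x' => fderiv ℝ F (x', t) (0, 1) :=
      funext fun x' => hpdt_eq x' t
    rw [he, hM]
    exact (happ (0, 1)).comp_hasDerivAt x (hcx t)
  have hpdxx_eq : pdxx u x t = R := hP_x.deriv
  have hl_t : HasDerivAt l (deriv l t) t := (hl t).hasDerivAt
  have hexp_t : HasDerivAt (fun t' => Real.exp (-r * t')) (Real.exp (-r * t) * -r) t := by
    have h : HasDerivAt (fun t' : ℝ => -r * t') (-r * 1) t := (hasDerivAt_id t).const_mul (-r)
    simpa using h.exp
  have hden : σ ^ 2 * x ≠ 0 := mul_ne_zero hσ2 hx0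
  have hdiv : HasDerivAt (fun x' => 2 * r * u x' t / (σ ^ 2 * x'))
      ((2 * r * P * (σ ^ 2 * x) - 2 * r * u x t * (σ ^ 2 * 1)) / (σ ^ 2 * x) ^ 2) x :=
    (hU_x.const_mul (2 * r)).div ((hasDerivAt_id' (x := x)).const_mul (σ ^ 2)) hden
  have hTt := ((hP_t.neg.mul hl_t).add (hasDerivAt_const t (a / x))).add
      (((hU_t.const_mul (2 * b)).div_const (σ ^ 2 * x)).mul hexp_t)
  have hTx := (((((hQ_x.mul_const (l t)).add (hU_x.mul_const (deriv l t))).add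
      (hasDerivAt_const x (g t))).sub ((hU_x.const_mul b).mul_const (Real.exp (-r * t)))).add
      ((((hP_x.add hdiv).const_mul b).mul (hasDerivAt_id' (x := x))).mul_const (Real.exp (-r * t))))
  simp only [pdx, pdt, Pi.add_def, Pi.mul_def, Pi.neg_def, Pi.sub_def] at hTt hTx ⊢
  rw [hTt.deriv, hTx.deriv]
  rw [hpdx_eq, hpdt_eq, hpdxx_eq] at hpde
  rw [← hP, ← hQ] at hpde
  rw [hU_x.deriv]
  have hexp : Real.exp (-r * t) ≠ 0 := Real.exp_ne_zero _
  field_simp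
  simp only [neg_mul, ← hU]
  linear_combination 2 * b * Real.exp (-(r * t)) * hpde
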